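/- For every natural number t ≥ 0, the t-th power of the matrix product T·R satisfies the closed form (T·R)^t = I + t·P + t²·N, where P = [[-3/2,-1/2,1/2],[2,0,-2],[-1/2,1/2,3/2]] and N = [[1/2,1/2,1/2],[-1,-1,-1],[1/2,1/2,1/2]]. -/
import Mathlib


open Matrix

/-- The matrix `R`. -/
def R : Matrix (Fin 3) (Fin 3) ℝ := !![0,0,-1; 1,0,-1; 0,1,-1]

/-- The matrix `T`. -/
def T : Matrix (Fin 3) (Fin 3) ℝ := !![-1,0,0; 2,1,0; -4,0,1]

/-- `P = log(T·R)`. -/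
noncomputable def P : Matrix (Fin 3) (Fin 3) ℝ := !![-3/2,-1/2,1/2; 2,0,-2; -1/2,1/2,3/2]

/-- `N = P²/2`. -/
noncomputable def N : Matrix (Fin 3) (Fin 3) ℝ := !![1/2,1/2,1/2; -1,-1,-1; 1/2,1/2,1/2]

/-- Closed form for the powers of `T·R`: `(T·R)^t = I + t·P + t²·N`. -/
theorem TR_pow (t : ℕ) :
    (T * R) ^ t = 1 + (t : ℝ) • P + ((t : ℝ) ^ 2) • N := by
  induction t with
  | zero =>
    ext i j
    fin_cases i <;> fin_cases j <;>
      simp [P, N, Matrix.one_apply]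
  | succ t ih =>
    rw [pow_succ, ih]
    push_cast
    ext i j
    fin_cases i <;> fin_cases j <;>
      simp [T, R, P, N, Matrix.mul_apply, Fin.sum_univ_three, Matrix.one_apply] <;>
      ring
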